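/- Let G ∈ ℝ^{m×n}, b ∈ ℝ^m, and A_d ∈ ℝ^{n×n}, and suppose the polyhedron P = {x ∈ ℝⁿ : Gx ≤ b} is nonempty. Then P is an invariant set for the discrete system x_{k+1} = A_d·x_k (i.e., A_d·x ∈ P for every x ∈ P) if and only if there exists a matrix H̃ ∈ ℝ^{m×m} such that every entry of H̃ is nonnegative, H̃·G = G·A_d, and H̃·b ≤ b. -/

import Mathlib

open Matrix Finset

/-- Homogeneous Farkas lemma, by induction on the number of generators. -/
lemma farkas_hom : ∀ (m : ℕ) {n : ℕ} (A : Fin m → Fin n → ℝ) (c : Fin n → ℝ),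
    (∃ y : Fin m → ℝ, (∀ i, 0 ≤ y i) ∧ ∑ i, y i • A i = c) ∨
    (∃ z : Fin n → ℝ, (∀ i, 0 ≤ A i ⬝ᵥ z) ∧ c ⬝ᵥ z < 0) := by
  intro m
  induction m with
  | zero =>
    intro n A c
    by_cases hc : c = 0
    · exact Or.inl ⟨0, fun i => le_refl 0, by simp [hc]⟩
    · refine Or.inr ⟨-c, fun i => i.elim0, ?_⟩
      have h1 : (0:ℝ) ≤ c ⬝ᵥ c := Finset.sum_nonneg (fun i _ => mul_self_nonneg (c i))
      rcases h1.eq_or_lt' with h0 | h0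
      · exact absurd (dotProduct_self_eq_zero.mp h0) hc
      · rw [dotProduct_neg]; linarith
  | succ m ih =>
    intro n A c
    set al : Fin n → ℝ := A (Fin.last m) with hal
    rcases ih (fun i => A i.castSucc) c with ⟨y, hy, hsum⟩ | ⟨z, hz, hcz⟩
    · refine Or.inl ⟨Fin.snoc y 0, ?_, ?_⟩
      · intro i
        refine Fin.lastCases ?_ ?_ i
        · simp
        · intro j; simpa using hy j
      · rw [Fin.sum_univ_castSucc]
        simpa using hsum
    · by_cases hs : 0 ≤ al ⬝ᵥ z
      · refine Or.inr ⟨z, ?_, hcz⟩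
        intro i
        refine Fin.lastCases hs (fun j => hz j) i
      · push_neg at hs
        set t : ℝ := al ⬝ᵥ z with htdef
        have ht : t < 0 := hs
        have ht0 : t ≠ 0 := ne_of_lt ht
        set B : Fin m → Fin n → ℝ :=
          fun i => A i.castSucc - ((A i.castSucc ⬝ᵥ z) / t) • al with hB
        set c' : Fin n → ℝ := c - ((c ⬝ᵥ z) / t) • al with hc'
        rcases ih B c' with ⟨y, hy, hsum⟩ | ⟨z', hz', hcz'⟩
        · -- c ∈ cone
          set S : ℝ := ∑ i, y i * (A i.castSucc ⬝ᵥ z) with hS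
          have hSnn : 0 ≤ S :=
            Finset.sum_nonneg (fun i _ => mul_nonneg (hy i) (hz i))
          set μ : ℝ := (c ⬝ᵥ z - S) / t with hμ
          have hμpos : 0 < μ := div_pos_of_neg_of_neg (by linarith) ht
          refine Or.inl ⟨Fin.snoc y μ, ?_, ?_⟩
          · intro i
            refine Fin.lastCases ?_ ?_ i
            · simpa using hμpos.le
            · intro j; simpa using hy j
          · rw [Fin.sum_univ_castSucc]
            simp only [Fin.snoc_castSucc, Fin.snoc_last]
            funext j
            have h1 := congrFun hsum j
            simp only [Finset.sum_apply, Pi.smul_apply, Pi.sub_apply, smul_eq_mul,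
              hB, hc'] at h1
            simp only [Pi.add_apply, Finset.sum_apply, Pi.smul_apply, smul_eq_mul]
            have expand : ∑ i, y i * (A i.castSucc j - A i.castSucc ⬝ᵥ z / t * al j)
                = (∑ i, y i * A i.castSucc j) - S / t * al j := by
              simp only [mul_sub]
              rw [Finset.sum_sub_distrib]
              congr 1
              rw [hS, Finset.sum_div, Finset.sum_mul]
              exact Finset.sum_congr rfl (fun i _ => by ring)
            have hmu : μ * al j = (c ⬝ᵥ z / t) * al j - (S / t) * al j := by
              rw [hμ]; ring
            linarith [h1, expand, hmu]
        · -- separating vector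
          refine Or.inr ⟨z' - ((al ⬝ᵥ z') / t) • z, ?_, ?_⟩
          · intro i
            refine Fin.lastCases ?_ ?_ i
            · rw [dotProduct_sub, dotProduct_smul, smul_eq_mul, ← hal, ← htdef,
                div_mul_cancel₀ _ ht0, sub_self]
            · intro j
              have h1 := hz' j
              rw [hB] at h1
              rw [dotProduct_sub, dotProduct_smul, smul_eq_mul]
              rw [sub_dotProduct, smul_dotProduct, smul_eq_mul] at h1
              have : A j.castSucc ⬝ᵥ z' - al ⬝ᵥ z' / t * (A j.castSucc ⬝ᵥ z)
                  = A j.castSucc ⬝ᵥ z' - A j.castSucc ⬝ᵥ z / t * (al ⬝ᵥ z') := by ring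
              rw [this]; exact h1
          · rw [dotProduct_sub, dotProduct_smul, smul_eq_mul]
            rw [hc', sub_dotProduct, smul_dotProduct, smul_eq_mul] at hcz'
            have : c ⬝ᵥ z' - al ⬝ᵥ z' / t * (c ⬝ᵥ z)
                = c ⬝ᵥ z' - c ⬝ᵥ z / t * (al ⬝ᵥ z') := by ring
            rw [this]; exact hcz'

/-- Affine Farkas lemma. -/
lemma farkas_affine {m n : ℕ} (G : Matrix (Fin m) (Fin n) ℝ) (b : Fin m → ℝ)
    (c : Fin n → ℝ) (d : ℝ)
    (hP : ∃ x : Fin n → ℝ, ∀ i, G.mulVec x i ≤ b i)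
    (himp : ∀ x : Fin n → ℝ, (∀ i, G.mulVec x i ≤ b i) → c ⬝ᵥ x ≤ d) :
    ∃ y : Fin m → ℝ, (∀ i, 0 ≤ y i) ∧ (∀ j, ∑ i, y i * G i j = c j) ∧ y ⬝ᵥ b ≤ d := by
  set A : Fin (m + 1) → Fin (n + 1) → ℝ :=
    Fin.snoc (fun i => Fin.cons (b i) (fun j => -(G i j))) (Fin.cons 1 0) with hA
  set cv : Fin (n + 1) → ℝ := Fin.cons d (fun j => -(c j)) with hcv
  rcases farkas_hom (m + 1) A cv with ⟨y, hy, hsum⟩ | ⟨w, hw, hcw⟩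
  · refine ⟨fun i => y i.castSucc, fun i => hy _, ?_, ?_⟩
    · intro j
      have h1 := congrFun hsum j.succ
      rw [Fin.sum_univ_castSucc] at h1
      simp only [hA, hcv, Finset.sum_apply, Pi.add_apply, Pi.smul_apply, smul_eq_mul,
        Fin.snoc_castSucc, Fin.snoc_last, Fin.cons_succ, Pi.zero_apply, mul_zero,
        add_zero] at h1
      have : ∑ i, y i.castSucc * G i j = -∑ i, y i.castSucc * -G i j := by
        rw [← Finset.sum_neg_distrib]
        exact Finset.sum_congr rfl (fun i _ => by ring)
      rw [this, h1]; ring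
    · have h0 := congrFun hsum 0
      rw [Fin.sum_univ_castSucc] at h0
      simp only [hA, hcv, Finset.sum_apply, Pi.add_apply, Pi.smul_apply, smul_eq_mul,
        Fin.snoc_castSucc, Fin.snoc_last, Fin.cons_zero, mul_one] at h0
      have := hy (Fin.last m)
      have : (fun i : Fin m => y i.castSucc) ⬝ᵥ b = ∑ i, y i.castSucc * b i := rfl
      rw [this]
      nlinarith [hy (Fin.last m), h0]
  · -- derive a contradiction
    exfalso
    set s : ℝ := w 0 with hsdef
    set z : Fin n → ℝ := fun j => w j.succ with hzdef
    have hdot : ∀ (a : ℝ) (u : Fin n → ℝ), (Fin.cons a u : Fin (n+1) → ℝ) ⬝ᵥ w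
        = a * s + u ⬝ᵥ z := by
      intro a u
      simp [dotProduct, Fin.sum_univ_succ, hsdef, hzdef]
    have hs : 0 ≤ s := by
      have := hw (Fin.last m)
      rw [hA] at this
      simp only [Fin.snoc_last] at this
      rw [hdot] at this
      simpa using this
    have hGi : ∀ i, G i ⬝ᵥ z ≤ b i * s := by
      intro i
      have := hw i.castSucc
      rw [hA] at this
      simp only [Fin.snoc_castSucc] at this
      rw [hdot] at this
      have hneg : (fun j => -(G i j)) ⬝ᵥ z = -(G i ⬝ᵥ z) := by
        simp [dotProduct, Finset.sum_neg_distrib]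
      rw [hneg] at this
      linarith
    have hbad : d * s < c ⬝ᵥ z := by
      rw [hcv, hdot] at hcw
      have hneg : (fun j => -(c j)) ⬝ᵥ z = -(c ⬝ᵥ z) := by
        simp [dotProduct, Finset.sum_neg_distrib]
      rw [hneg] at hcw
      linarith
    rcases hs.eq_or_lt' with hs0 | hspos
    · -- s = 0 : unboundedness contradiction
      obtain ⟨x0, hx0⟩ := hP
      have hGz : ∀ i, G i ⬝ᵥ z ≤ 0 := by
        intro i; have := hGi i; rw [hs0, mul_zero] at this; exact this
      have hcz : 0 < c ⬝ᵥ z := by rw [hs0, mul_zero] at hbad; exact hbad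
      set r : ℝ := max 0 ((d - c ⬝ᵥ x0) / (c ⬝ᵥ z) + 1) with hr
      have hrnn : 0 ≤ r := le_max_left _ _
      have hxr : ∀ i, G.mulVec (x0 + r • z) i ≤ b i := by
        intro i
        have : G.mulVec (x0 + r • z) i = G.mulVec x0 i + r * (G i ⬝ᵥ z) := by
          rw [Matrix.mulVec_add]
          simp [Matrix.mulVec, dotProduct_smul]
        rw [this]
        have := mul_nonpos_of_nonneg_of_nonpos hrnn (hGz i)
        linarith [hx0 i]
      have hle := himp _ hxr
      have hceval : c ⬝ᵥ (x0 + r • z) = c ⬝ᵥ x0 + r * (c ⬝ᵥ z) := by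
        rw [dotProduct_add, dotProduct_smul]; rfl
      rw [hceval] at hle
      have hrbig : (d - c ⬝ᵥ x0) / (c ⬝ᵥ z) < r :=
        lt_of_lt_of_le (lt_add_one _) (le_max_right _ _)
      have := (div_lt_iff₀ hcz).mp hrbig
      linarith
    · -- s > 0 : scale down
      set x : Fin n → ℝ := s⁻¹ • z with hx
      have hxP : ∀ i, G.mulVec x i ≤ b i := by
        intro i
        have : G.mulVec x i = s⁻¹ * (G i ⬝ᵥ z) := by
          rw [hx]; simp [Matrix.mulVec, dotProduct_smul]
        rw [this]
        have h2 := hGi i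
        calc s⁻¹ * (G i ⬝ᵥ z) ≤ s⁻¹ * (b i * s) :=
              mul_le_mul_of_nonneg_left h2 (inv_nonneg.mpr hspos.le)
          _ = b i := by field_simp
      have hle := himp x hxP
      have : c ⬝ᵥ x = s⁻¹ * (c ⬝ᵥ z) := by
        rw [hx, dotProduct_smul]; rfl
      rw [this] at hle
      have h3 := mul_le_mul_of_nonneg_left hle hspos.le
      rw [← mul_assoc, mul_inv_cancel₀ (ne_of_gt hspos), one_mul] at h3
      nlinarith


/-- For a nonempty polyhedron `P = {x : Gx ≤ b}`, `P` is an
invariant set for the discrete system `x_{k+1} = A_d x_k` if and only if there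
exists an entrywise nonnegative matrix `H̃` with `H̃ G = G A_d` and `H̃ b ≤ b`. -/
theorem stmt_13 {m n : ℕ} (G : Matrix (Fin m) (Fin n) ℝ) (b : Fin m → ℝ)
    (Ad : Matrix (Fin n) (Fin n) ℝ)
    (hP : ∃ x : Fin n → ℝ, ∀ i, G.mulVec x i ≤ b i) :
    (∀ x : Fin n → ℝ, (∀ i, G.mulVec x i ≤ b i) →
      ∀ i, G.mulVec (Ad.mulVec x) i ≤ b i) ↔
    ∃ Ht : Matrix (Fin m) (Fin m) ℝ,
      (∀ i j, 0 ≤ Ht i j) ∧ Ht * G = G * Ad ∧ ∀ i, Ht.mulVec b i ≤ b i := by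
  constructor
  · intro hinv
    have key : ∀ i : Fin m, ∃ y : Fin m → ℝ, (∀ k, 0 ≤ y k) ∧
        (∀ j, ∑ k, y k * G k j = (G * Ad) i j) ∧ y ⬝ᵥ b ≤ b i := by
      intro i
      refine farkas_affine G b (fun j => (G * Ad) i j) (b i) hP ?_
      intro x hx
      have h1 := hinv x hx i
      rw [Matrix.mulVec_mulVec] at h1
      exact h1
    choose y hy1 hy2 hy3 using key
    refine ⟨Matrix.of y, fun i j => hy1 i j, ?_, ?_⟩
    · ext i k
      rw [Matrix.mul_apply]
      exact hy2 i k
    · intro i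
      exact hy3 i
  · rintro ⟨Ht, hpos, hEq, hb⟩ x hx i
    rw [Matrix.mulVec_mulVec, ← hEq, ← Matrix.mulVec_mulVec]
    calc Ht.mulVec (G.mulVec x) i = ∑ j, Ht i j * G.mulVec x j := rfl
      _ ≤ ∑ j, Ht i j * b j :=
          Finset.sum_le_sum (fun j _ => mul_le_mul_of_nonneg_left (hx j) (hpos i j))
      _ = Ht.mulVec b i := rfl
      _ ≤ b i := hb i
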